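/- arXiv:1112.4230 — 2 statements merged into one kernel-verified Lean document; each statement's English description precedes it below -/
import Mathlib

section
/- Let x_1, …, x_m, u, α, t be nonzero elements of a field, and define the interpolation polynomials of column type e_r(x;α|t) = Σ_{1 ≤ i_1 < ⋯ < i_r ≤ m} ∏_{s=1}^{r} e(x_{i_s}; t^{i_s - s} α) for 0 ≤ r ≤ m, where e(z;w) = z + z^{-1} - w - w^{-1}. Then Σ_{r=0}^{m} (-1)^r e_r(x;α|t) · e(u;α)_{t, m-r} = ∏_{i=1}^{m} e(u; x_i), where e(u;α)_{t,k} = ∏_{j=0}^{k-1} e(u; t^j α). -/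
/-- The BC-type building block `e(z;w) = z + z⁻¹ - w - w⁻¹`. -/
noncomputable def eBC {K : Type*} [Field K] (z w : K) : K := z + z⁻¹ - w - w⁻¹

/-- The BC-type `q`-shifted factorial `e(z;w)_{q,l} = ∏_{i=0}^{l-1} e(z; q^i w)`. -/
noncomputable def eBCfac {K : Type*} [Field K] (q z w : K) (l : ℕ) : K :=
  ∏ i ∈ Finset.range l, eBC z (q ^ i * w)

/-- The finset of strictly increasing functions `Fin r → Fin m`,
encoding the index sets `1 ≤ i_1 < ⋯ < i_r ≤ m`. -/
def smFuns (r m : ℕ) : Finset (Fin r → Fin m) :=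
  Finset.univ.filter fun f => ∀ i j : Fin r, i < j → f i < f j

/-- The column-type interpolation polynomial
`e_r(x;α|t) = Σ_{1 ≤ i_1 < ⋯ < i_r ≤ m} ∏_{s=1}^{r} e(x_{i_s}; t^{i_s - s} α)`. -/
noncomputable def eCol {K : Type*} [Field K] {m : ℕ} (x : Fin m → K) (α t : K) (r : ℕ) : K :=
  ∑ f ∈ smFuns r m, ∏ s : Fin r,
    eBC (x (f s)) (t ^ (((f s : ℕ) : ℤ) - ((s : ℕ) : ℤ)) * α)

lemma mem_smFuns {r m : ℕ} {f : Fin r → Fin m} : f ∈ smFuns r m ↔ StrictMono f := by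
  simp [smFuns, StrictMono]

lemma eCol_zero {K : Type*} [Field K] {m : ℕ} (x : Fin m → K) (α t : K) :
    eCol x α t 0 = 1 := by
  simp [eCol, smFuns, Finset.filter_true_of_mem]

lemma eCol_of_lt {K : Type*} [Field K] {m : ℕ} (x : Fin m → K) (α t : K) {r : ℕ}
    (h : m < r) : eCol x α t r = 0 := by
  have he : smFuns r m = ∅ := by
    refine Finset.eq_empty_of_forall_notMem fun f hf => ?_
    have := Fintype.card_le_of_injective f (mem_smFuns.mp hf).injective
    simp only [Fintype.card_fin] at this
    omega
  rw [eCol, he, Finset.sum_empty]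

lemma eCol_succ {K : Type*} [Field K] {m : ℕ} (x : Fin (m + 1) → K) (α t : K) (k : ℕ) :
    eCol x α t (k + 1) =
      eCol (x ∘ Fin.castSucc) α t (k + 1) +
        eCol (x ∘ Fin.castSucc) α t k *
          eBC (x (Fin.last m)) (t ^ ((m : ℤ) - (k : ℤ)) * α) := by
  have hsplit := Finset.sum_filter_add_sum_filter_not (smFuns (k + 1) (m + 1))
    (fun f => f (Fin.last k) = Fin.last m)
    (fun f => ∏ s : Fin (k+1), eBC (x (f s)) (t ^ (((f s : ℕ) : ℤ) - ((s : ℕ) : ℤ)) * α))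
  rw [eCol, ← hsplit]
  have hB : ∑ f ∈ (smFuns (k+1) (m+1)).filter (fun f => ¬ f (Fin.last k) = Fin.last m),
      ∏ s : Fin (k+1), eBC (x (f s)) (t ^ (((f s : ℕ) : ℤ) - ((s : ℕ) : ℤ)) * α)
      = eCol (x ∘ Fin.castSucc) α t (k + 1) := by
    rw [eCol]
    symm
    apply Finset.sum_bij (fun g _ => Fin.castSucc ∘ g)
    · intro g hg
      have hg' := mem_smFuns.mp hg
      rw [Finset.mem_filter]
      constructor
      · exact mem_smFuns.mpr fun i j hij => by
          simpa [Fin.castSucc_lt_castSucc_iff] using hg' hij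
      · simpa using (Fin.castSucc_lt_last (g (Fin.last k))).ne
    · intro g₁ h₁ g₂ h₂ h
      funext i
      exact Fin.castSucc_injective _ (congrFun h i)
    · intro f hf
      rw [Finset.mem_filter] at hf
      obtain ⟨hf1, hf2⟩ := hf
      have hf1 := mem_smFuns.mp hf1
      have hne : ∀ s, f s ≠ Fin.last m := by
        intro s
        have h1 : f s ≤ f (Fin.last k) := hf1.monotone (Fin.le_last s)
        exact (lt_of_le_of_lt h1 (lt_of_le_of_ne (Fin.le_last _) hf2)).ne
      refine ⟨fun s => (f s).castPred (hne s), ?_, ?_⟩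
      · apply mem_smFuns.mpr
        intro i j hij
        rw [Fin.lt_def]
        simp only [Fin.coe_castPred]
        exact hf1 hij
      · funext s
        simp [Fin.castSucc_castPred]
    · intro g hg
      apply Finset.prod_congr rfl
      intro s _
      simp only [Function.comp_apply, Fin.coe_castSucc]
  have hA : ∑ f ∈ (smFuns (k+1) (m+1)).filter (fun f => f (Fin.last k) = Fin.last m),
      ∏ s : Fin (k+1), eBC (x (f s)) (t ^ (((f s : ℕ) : ℤ) - ((s : ℕ) : ℤ)) * α)
      = eCol (x ∘ Fin.castSucc) α t k *
          eBC (x (Fin.last m)) (t ^ ((m : ℤ) - (k : ℤ)) * α) := by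
    rw [eCol, Finset.sum_mul]
    symm
    apply Finset.sum_bij
      (fun g _ => (Fin.snoc (Fin.castSucc ∘ g) (Fin.last m) : Fin (k+1) → Fin (m+1)))
    · intro g hg
      have hg' := mem_smFuns.mp hg
      rw [Finset.mem_filter]
      constructor
      · apply mem_smFuns.mpr
        intro i j hij
        rcases Fin.eq_castSucc_or_eq_last j with ⟨j', rfl⟩ | rfl
        · have hi : i ≠ Fin.last k := (hij.trans (Fin.castSucc_lt_last j')).ne
          obtain ⟨i', rfl⟩ := Fin.exists_castSucc_eq.mpr hi
          simp only [Fin.snoc_castSucc, Function.comp_apply]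
          exact Fin.castSucc_lt_castSucc_iff.mpr
            (hg' (Fin.castSucc_lt_castSucc_iff.mp hij))
        · obtain ⟨i', rfl⟩ := Fin.exists_castSucc_eq.mpr hij.ne
          simp only [Fin.snoc_castSucc, Fin.snoc_last, Function.comp_apply]
          exact Fin.castSucc_lt_last _
      · simp
    · intro g₁ h₁ g₂ h₂ h
      funext i
      have := congrFun h (Fin.castSucc i)
      simp only [Fin.snoc_castSucc, Function.comp_apply] at this
      exact Fin.castSucc_injective _ this
    · intro f hf
      rw [Finset.mem_filter] at hf
      obtain ⟨hf1, hf2⟩ := hf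
      have hf1 := mem_smFuns.mp hf1
      have hne : ∀ s : Fin k, f (Fin.castSucc s) ≠ Fin.last m := by
        intro s
        have : f (Fin.castSucc s) < f (Fin.last k) := hf1 (Fin.castSucc_lt_last s)
        rw [hf2] at this
        exact this.ne
      refine ⟨fun s => (f (Fin.castSucc s)).castPred (hne s), ?_, ?_⟩
      · apply mem_smFuns.mpr
        intro i j hij
        rw [Fin.lt_def]
        simp only [Fin.coe_castPred]
        exact hf1 (Fin.castSucc_lt_castSucc_iff.mpr hij)
      · funext s
        rcases Fin.eq_castSucc_or_eq_last s with ⟨s', rfl⟩ | rfl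
        · simp [Fin.castSucc_castPred]
        · simp [hf2]
    · intro g hg
      rw [Fin.prod_univ_castSucc]
      congr 1
      · apply Finset.prod_congr rfl
        intro s _
        simp only [Function.comp_apply, Fin.snoc_castSucc, Fin.coe_castSucc]
      · simp only [Fin.snoc_last, Fin.val_last]
  rw [hA, hB]
  ring

lemma eBCfac_succ {K : Type*} [Field K] (q z w : K) (l : ℕ) :
    eBCfac q z w (l + 1) = eBCfac q z w l * eBC z (q ^ l * w) := by
  simp [eBCfac, Finset.prod_range_succ]

/-- Generating function identity:
`Σ_{r=0}^{m} (-1)^r e_r(x;α|t) · e(u;α)_{t, m-r} = ∏_{i=1}^{m} e(u; x_i)`. -/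
theorem eCol_generating_function {K : Type*} [Field K] {m : ℕ}
    (x : Fin m → K) (u α t : K)
    (hx : ∀ i, x i ≠ 0) (hu : u ≠ 0) (hα : α ≠ 0) (ht : t ≠ 0) :
    ∑ r ∈ Finset.range (m + 1), (-1) ^ r * eCol x α t r * eBCfac t u α (m - r) =
      ∏ i : Fin m, eBC u (x i) := by
  clear hx hu hα ht
  induction m with
  | zero => simp [eCol_zero, eBCfac]
  | succ m ih =>
    have hdiff : ∀ w : K, eBC u w - eBC (x (Fin.last m)) w = eBC u (x (Fin.last m)) := by
      intro w; unfold eBC; ring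
    have hG : (∑ r ∈ Finset.range (m + 1),
          (-1 : K) ^ (r + 1) * eCol (x ∘ Fin.castSucc) α t (r + 1) * eBCfac t u α (m - r))
          + eBCfac t u α (m + 1)
        = ∑ r ∈ Finset.range (m + 1),
            (-1) ^ r * eCol (x ∘ Fin.castSucc) α t r * eBCfac t u α (m + 1 - r) := by
      have h := Finset.sum_range_succ'
        (fun r => (-1 : K) ^ r * eCol (x ∘ Fin.castSucc) α t r * eBCfac t u α (m + 1 - r))
        (m + 1)
      rw [Finset.sum_range_succ] at h
      simp only [Nat.succ_sub_succ, pow_zero, one_mul, eCol_zero, Nat.sub_zero,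
        Nat.sub_self, eCol_of_lt _ _ _ (Nat.lt_succ_self m), mul_zero, zero_mul,
        add_zero] at h
      exact h.symm
    calc ∑ r ∈ Finset.range (m + 1 + 1), (-1 : K) ^ r * eCol x α t r * eBCfac t u α (m + 1 - r)
        = (∑ r ∈ Finset.range (m + 1),
            (-1 : K) ^ (r + 1) * eCol x α t (r + 1) * eBCfac t u α (m + 1 - (r + 1)))
          + (-1 : K) ^ 0 * eCol x α t 0 * eBCfac t u α (m + 1 - 0) :=
          Finset.sum_range_succ' _ (m + 1)
      _ = (∑ r ∈ Finset.range (m + 1),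
            ((-1 : K) ^ (r + 1) * eCol (x ∘ Fin.castSucc) α t (r + 1) * eBCfac t u α (m - r)
             - (-1 : K) ^ r * eCol (x ∘ Fin.castSucc) α t r
                * eBC (x (Fin.last m)) (t ^ (m - r) * α) * eBCfac t u α (m - r)))
          + eBCfac t u α (m + 1) := by
          congr 1
          · apply Finset.sum_congr rfl
            intro r hr
            rw [Finset.mem_range] at hr
            have h1 : m + 1 - (r + 1) = m - r := by omega
            have h2 : ((m : ℤ) - (r : ℤ)) = ((m - r : ℕ) : ℤ) := by omega
            rw [h1, eCol_succ, h2, zpow_natCast]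
            ring
          · simp [eCol_zero]
      _ = ((∑ r ∈ Finset.range (m + 1),
            (-1 : K) ^ (r + 1) * eCol (x ∘ Fin.castSucc) α t (r + 1) * eBCfac t u α (m - r))
          + eBCfac t u α (m + 1))
          - ∑ r ∈ Finset.range (m + 1),
              (-1 : K) ^ r * eCol (x ∘ Fin.castSucc) α t r
                * eBC (x (Fin.last m)) (t ^ (m - r) * α) * eBCfac t u α (m - r) := by
          rw [Finset.sum_sub_distrib]; ring
      _ = ∑ r ∈ Finset.range (m + 1),
            (-1 : K) ^ r * eCol (x ∘ Fin.castSucc) α t r * eBCfac t u α (m - r)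
              * eBC u (x (Fin.last m)) := by
          rw [hG, ← Finset.sum_sub_distrib]
          apply Finset.sum_congr rfl
          intro r hr
          rw [Finset.mem_range] at hr
          have h1 : m + 1 - r = (m - r) + 1 := by omega
          rw [h1, eBCfac_succ, ← hdiff (t ^ (m - r) * α)]
          ring
      _ = (∑ r ∈ Finset.range (m + 1),
            (-1 : K) ^ r * eCol (x ∘ Fin.castSucc) α t r * eBCfac t u α (m - r))
              * eBC u (x (Fin.last m)) := by rw [Finset.sum_mul]
      _ = ∏ i : Fin (m + 1), eBC u (x i) := by
          rw [ih (x ∘ Fin.castSucc), Fin.prod_univ_castSucc]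
          rfl
end

section
/- Let m, n be natural numbers, λ a partition contained in the m × n rectangle (i.e., λ has at most m parts, each at most n), λ' its conjugate partition, and set λ*_k = m − λ'_{n+1−k} for 1 ≤ k ≤ n. Let Q, t, q, u be nonzero elements of a field such that all brackets below are nonzero. Then ∏_{k=1}^{n} e(t Q q^{n−k} t^{λ*_k − 1}; u) / e(Q q^{n−k}; u) = ∏_{(i,j)} e(t Q t^{m−i} q^{j−1}; u) / e(Q t^{m−i} q^{j−1}; u), where the product on the right runs over all cells (i,j) with 1 ≤ i ≤ m, 1 ≤ j ≤ n, and j > λ_i (i.e., over the complement of λ in the m × n rectangle), and e(z;w) := z + z^{-1} − w − w^{-1}. -/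
/-- The conjugate partition: `λ'_j = #{i : λ_i ≥ j}` (with `j ≥ 1`). -/
def conjPart {m : ℕ} (lam : Fin m → ℕ) (j : ℕ) : ℕ :=
  (Finset.univ.filter fun i : Fin m => j ≤ lam i).card

/-- The complementary-conjugate partition `λ*_k = m − λ'_{n+1−k}` (1-based `k`),
written here with 0-based `k : Fin n`, so `λ*_{k+1} = m − λ'_{n−k}`. -/
def lamStar {m : ℕ} (n : ℕ) (lam : Fin m → ℕ) (k : Fin n) : ℕ :=
  m - conjPart lam (n - (k : ℕ))

lemma conjPart_iff {m : ℕ} (lam : Fin m → ℕ) (hanti : Antitone lam) (v : ℕ) (i : Fin m) :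
    v ≤ lam i ↔ (i : ℕ) < conjPart lam v := by
  constructor
  · intro h
    have hsub : Finset.Iic i ⊆ Finset.univ.filter (fun x : Fin m => v ≤ lam x) := by
      intro x hx
      simp only [Finset.mem_Iic] at hx
      simp only [Finset.mem_filter, Finset.mem_univ, true_and]
      exact le_trans h (hanti hx)
    have := Finset.card_le_card hsub
    rw [Fin.card_Iic] at this
    unfold conjPart
    omega
  · intro h
    by_contra hc
    push_neg at hc
    have hsub : Finset.univ.filter (fun x : Fin m => v ≤ lam x) ⊆ Finset.Iio i := by
      intro x hx
      simp only [Finset.mem_filter, Finset.mem_univ, true_and] at hx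
      simp only [Finset.mem_Iio]
      by_contra hxi
      push_neg at hxi
      exact absurd (le_trans hx (hanti hxi)) (by omega)
    have := Finset.card_le_card hsub
    rw [Fin.card_Iio] at this
    unfold conjPart at h
    omega

lemma telescope {K : Type*} [Field K] (a : ℕ → K) (N : ℕ) (h0 : a 0 ≠ 0)
    (h : ∀ s, s < N → a s ≠ 0) :
    ∏ s ∈ Finset.range N, a (s + 1) / a s = a N / a 0 := by
  induction N with
  | zero => simp [div_self h0]
  | succ N ih =>
    have hN : a N ≠ 0 := h N (Nat.lt_succ_self N)
    rw [Finset.prod_range_succ, ih (fun s hs => h s (by omega)),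
      div_mul_div_comm, mul_comm (a N) (a (N + 1)), mul_comm (a 0) (a N)]
    field_simp

lemma column {K : Type*} [Field K] (m c : ℕ) (a : ℕ → K) (h0 : a 0 ≠ 0)
    (hs : ∀ s, s < m → a s ≠ 0) :
    ∏ i ∈ Finset.univ.filter (fun i : Fin m => c ≤ (i : ℕ)),
      (a (m - (i : ℕ)) / a (m - 1 - (i : ℕ))) = a (m - c) / a 0 := by
  cases m with
  | zero => simp [div_self h0]
  | succ m =>
    rw [← telescope a (m + 1 - c) h0 (fun s hs' => hs s (by omega))]
    refine Finset.prod_nbij' (fun i => m + 1 - 1 - (i : ℕ))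
      (fun s => ⟨m - s, by omega⟩) ?_ ?_ ?_ ?_ ?_
    all_goals intro x hx
    · simp only [Finset.mem_filter, Finset.mem_univ, true_and] at hx
      simp only [Finset.mem_range]
      omega
    · simp only [Finset.mem_range] at hx
      simp only [Finset.mem_filter, Finset.mem_univ, true_and]
      omega
    · simp only [Finset.mem_filter, Finset.mem_univ, true_and] at hx
      have := x.isLt
      ext
      simp only
      omega
    · simp only [Finset.mem_range] at hx
      simp only
      omega
    · simp only [Finset.mem_filter, Finset.mem_univ, true_and] at hx
      have hxm : (x : ℕ) < m + 1 := x.isLt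
      have h1 : m + 1 - (x : ℕ) = (m + 1 - 1 - (x : ℕ)) + 1 := by omega
      rw [h1]

/-- Eigenvalue identity underlying the kernel identity of dual Cauchy type:
`∏_{k=1}^{n} e(tQ q^{n−k} t^{λ*_k − 1}; u) / e(Q q^{n−k}; u)
  = ∏_{(i,j) ∈ (n^m) ∖ λ} e(tQ t^{m−i} q^{j−1}; u) / e(Q t^{m−i} q^{j−1}; u)`. -/
theorem dual_cauchy_eigenvalue {K : Type*} [Field K] (m n : ℕ)
    (lam : Fin m → ℕ) (hanti : Antitone lam) (hle : ∀ i, lam i ≤ n)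
    (Q t q u : K) (hQ : Q ≠ 0) (ht : t ≠ 0) (hq : q ≠ 0) (hu : u ≠ 0)
    (hden1 : ∀ k : Fin n, eBC (Q * q ^ (n - 1 - (k : ℕ))) u ≠ 0)
    (hden2 : ∀ (i : Fin m) (j : Fin n),
      eBC (Q * t ^ (m - 1 - (i : ℕ)) * q ^ (j : ℕ)) u ≠ 0) :
    (∏ k : Fin n,
        eBC (t * Q * q ^ (n - 1 - (k : ℕ)) * t ^ ((lamStar n lam k : ℤ) - 1)) u /
          eBC (Q * q ^ (n - 1 - (k : ℕ))) u) =
      ∏ i : Fin m, ∏ j ∈ Finset.univ.filter (fun j : Fin n => lam i ≤ (j : ℕ)),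
        eBC (t * Q * t ^ (m - 1 - (i : ℕ)) * q ^ (j : ℕ)) u /
          eBC (Q * t ^ (m - 1 - (i : ℕ)) * q ^ (j : ℕ)) u := by
  have hswap : (∏ i : Fin m, ∏ j ∈ Finset.univ.filter (fun j : Fin n => lam i ≤ (j : ℕ)),
        eBC (t * Q * t ^ (m - 1 - (i : ℕ)) * q ^ (j : ℕ)) u /
          eBC (Q * t ^ (m - 1 - (i : ℕ)) * q ^ (j : ℕ)) u)
      = ∏ j : Fin n, ∏ i ∈ Finset.univ.filter (fun i : Fin m => lam i ≤ (j : ℕ)),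
        eBC (t * Q * t ^ (m - 1 - (i : ℕ)) * q ^ (j : ℕ)) u /
          eBC (Q * t ^ (m - 1 - (i : ℕ)) * q ^ (j : ℕ)) u := by
    simp_rw [Finset.prod_filter]
    exact Finset.prod_comm
  rw [hswap]
  rw [← Equiv.prod_comp (Fin.revPerm (n := n))
    (fun k : Fin n => eBC (t * Q * q ^ (n - 1 - (k : ℕ)) *
        t ^ ((lamStar n lam k : ℤ) - 1)) u / eBC (Q * q ^ (n - 1 - (k : ℕ))) u)]
  simp only [Fin.revPerm_apply]
  refine Finset.prod_congr rfl fun j _ => ?_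
  have hjn : (j : ℕ) < n := j.isLt
  have hrev : ((Fin.rev j : Fin n) : ℕ) = n - 1 - (j : ℕ) := by
    simp [Fin.rev]; omega
  set c := conjPart lam ((j : ℕ) + 1) with hc
  have hcm : c ≤ m := by
    have h1 : (Finset.univ.filter fun i : Fin m => (j : ℕ) + 1 ≤ lam i).card
        ≤ (Finset.univ : Finset (Fin m)).card := Finset.card_filter_le _ _
    simp only [Finset.card_univ, Fintype.card_fin] at h1
    rw [hc]
    unfold conjPart
    exact h1
  have hexp : n - 1 - ((Fin.rev j : Fin n) : ℕ) = (j : ℕ) := by omega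
  have hstar : lamStar n lam (Fin.rev j) = m - c := by
    unfold lamStar
    rw [hrev, hc]
    congr 2
    omega
  rw [hexp, hstar]
  have hfilter : (Finset.univ.filter (fun i : Fin m => lam i ≤ (j : ℕ)))
      = Finset.univ.filter (fun i : Fin m => c ≤ (i : ℕ)) := by
    apply Finset.filter_congr
    intro i _
    have hiff := conjPart_iff lam hanti ((j : ℕ) + 1) i
    constructor
    · intro h
      by_contra hlt
      push_neg at hlt
      have := hiff.mpr (by omega)
      omega
    · intro h
      by_contra hlt
      push_neg at hlt
      have := hiff.mp (by omega)
      omega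
  rw [hfilter]
  have h0 : eBC (Q * t ^ 0 * q ^ (j : ℕ)) u ≠ 0 := by
    have := hden1 (Fin.rev j)
    rw [hrev] at this
    simpa [show n - 1 - (n - 1 - (j : ℕ)) = (j : ℕ) by omega] using this
  have hs : ∀ s, s < m → eBC (Q * t ^ s * q ^ (j : ℕ)) u ≠ 0 := by
    intro s hsm
    have := hden2 ⟨m - 1 - s, by omega⟩ j
    simpa only [show m - 1 - (m - 1 - s) = s by omega] using this
  have hprod : (∏ i ∈ Finset.univ.filter (fun i : Fin m => c ≤ (i : ℕ)),
        eBC (t * Q * t ^ (m - 1 - (i : ℕ)) * q ^ (j : ℕ)) u /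
          eBC (Q * t ^ (m - 1 - (i : ℕ)) * q ^ (j : ℕ)) u)
      = ∏ i ∈ Finset.univ.filter (fun i : Fin m => c ≤ (i : ℕ)),
        ((fun s => eBC (Q * t ^ s * q ^ (j : ℕ)) u) (m - (i : ℕ)) /
          (fun s => eBC (Q * t ^ s * q ^ (j : ℕ)) u) (m - 1 - (i : ℕ))) := by
    refine Finset.prod_congr rfl fun i _ => ?_
    have him : (i : ℕ) < m := i.isLt
    have h1 : m - (i : ℕ) = (m - 1 - (i : ℕ)) + 1 := by omega
    simp only [h1, pow_succ]
    ring_nf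
  have hR := hprod.trans (column m c (fun s => eBC (Q * t ^ s * q ^ (j : ℕ)) u) h0 hs)
  rw [hR]
  show eBC (t * Q * q ^ (j : ℕ) * t ^ ((↑(m - c) : ℤ) - 1)) u / eBC (Q * q ^ (j : ℕ)) u
      = eBC (Q * t ^ (m - c) * q ^ (j : ℕ)) u / eBC (Q * t ^ 0 * q ^ (j : ℕ)) u
  have hnum : t * Q * q ^ (j : ℕ) * t ^ ((↑(m - c) : ℤ) - 1)
      = Q * t ^ (m - c) * q ^ (j : ℕ) := by
    have htt : t * t ^ ((↑(m - c) : ℤ) - 1) = t ^ (m - c) := by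
      rw [zpow_sub_one₀ ht, zpow_natCast]
      field_simp
    calc t * Q * q ^ (j : ℕ) * t ^ ((↑(m - c) : ℤ) - 1)
        = Q * (t * t ^ ((↑(m - c) : ℤ) - 1)) * q ^ (j : ℕ) := by ring
      _ = Q * t ^ (m - c) * q ^ (j : ℕ) := by rw [htt]
  rw [hnum, pow_zero, mul_one]
end
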